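/- Let f : F → ℂ be a quadratic function with f(x^n) = a(x)^{2n} for all x ∈ F, where a : F → ℂ is additive and F ⊆ ℂ a field, n ≥ 2. Then f(1) = a(1)^{2n}, and there exist complex constants α_1, α_2 such that f(x) = α_1·a(x^2) + α_2·a(x)^2 for all x ∈ F. -/

import Mathlib

open Polynomial Finset

theorem stmt11 (K : Subfield ℂ) (n : ℕ) (hn : 2 ≤ n)
    (f a : K → ℂ) (B : K → K → ℂ)
    (hB1 : ∀ x y z : K, B (x + y) z = B x z + B y z)
    (hB2 : ∀ x y z : K, B x (y + z) = B x y + B x z)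
    (hBs : ∀ x y : K, B x y = B y x)
    (hf : ∀ x : K, f x = B x x)
    (ha : ∀ x y : K, a (x + y) = a x + a y)
    (heq : ∀ x : K, f (x ^ n) = a x ^ (2 * n)) :
    f 1 = a 1 ^ (2 * n) ∧
      ∃ α₁ α₂ : ℂ, ∀ x : K, f x = α₁ * a (x ^ 2) + α₂ * a x ^ 2 := by
  have h1 : f 1 = a 1 ^ (2 * n) := by
    have := heq 1; rwa [one_pow] at this
  refine ⟨h1, ?_⟩
  -- additivity consequences
  have Bml : ∀ (c : ℕ) (u v : K), B (c • u) v = c • B u v := fun c u v =>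
    (AddMonoidHom.mk' (fun y => B y v) (fun p q => hB1 p q v)).map_nsmul c u
  have Bmr : ∀ (c : ℕ) (u v : K), B u (c • v) = c • B u v := fun c u v =>
    (AddMonoidHom.mk' (B u) (fun p q => hB2 u p q)).map_nsmul c v
  have Bsuml : ∀ (s : Finset ℕ) (g : ℕ → K) (v : K),
      B (∑ i ∈ s, g i) v = ∑ i ∈ s, B (g i) v := fun s g v =>
    map_sum (AddMonoidHom.mk' (fun y => B y v) (fun p q => hB1 p q v)) g s
  have Bsumr : ∀ (s : Finset ℕ) (g : ℕ → K) (u : K),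
      B u (∑ i ∈ s, g i) = ∑ i ∈ s, B u (g i) := fun s g u =>
    map_sum (AddMonoidHom.mk' (B u) (fun p q => hB2 u p q)) g s
  have asmul : ∀ (c : ℕ) (u : K), a (c • u) = c • a u := fun c u =>
    (AddMonoidHom.mk' a ha).map_nsmul c u
  -- the polynomial identity
  have polyid : ∀ x : K,
      (∑ j ∈ range (n+1), ∑ k ∈ range (n+1),
        C ((n.choose j : ℂ) * (n.choose k : ℂ) * B (x^j) (x^k)) * X ^ ((n-j)+(n-k)))
      = (C (a x) + C (a 1) * X) ^ (2*n) := by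
    intro x
    apply eq_of_infinite_eval_eq
    have hsub : Set.range (Nat.cast : ℕ → ℂ) ⊆
        { z | eval z (∑ j ∈ range (n+1), ∑ k ∈ range (n+1),
          C ((n.choose j : ℂ) * (n.choose k : ℂ) * B (x^j) (x^k)) * X ^ ((n-j)+(n-k)))
          = eval z ((C (a x) + C (a 1) * X) ^ (2*n)) } := by
      rintro _ ⟨m, rfl⟩
      show eval _ _ = eval _ _
      have expand : (x + (m:K)) ^ n
          = ∑ k ∈ range (n+1), ((n.choose k * m ^ (n-k) : ℕ)) • x ^ k := by
        rw [add_pow]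
        refine Finset.sum_congr rfl fun k _ => ?_
        push_cast [nsmul_eq_mul]
        ring
      have lhsval : f ((x + (m:K)) ^ n)
          = ∑ j ∈ range (n+1), ∑ k ∈ range (n+1),
            (n.choose j : ℂ) * (n.choose k : ℂ) * B (x^j) (x^k) * (m:ℂ)^((n-j)+(n-k)) := by
        rw [hf, expand, Bsuml]
        refine Finset.sum_congr rfl fun j hj => ?_
        rw [Bml, Bsumr, Finset.smul_sum]
        refine Finset.sum_congr rfl fun k hk => ?_
        rw [Bmr, smul_smul, nsmul_eq_mul]
        push_cast [pow_add]
        ring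
      have rhsval : f ((x + (m:K)) ^ n) = (a x + a 1 * (m:ℂ)) ^ (2*n) := by
        rw [heq]
        congr 1
        have hm : (m : K) = m • (1 : K) := by simp
        rw [hm, ha, asmul, nsmul_eq_mul]
        push_cast
        ring
      rw [eval_finset_sum]
      simp only [eval_mul, eval_pow, eval_C, eval_X, eval_finset_sum, eval_add]
      rw [← lhsval, rhsval]
    exact Set.Infinite.mono hsub (Set.infinite_range_of_injective Nat.cast_injective)
  -- coefficient extraction
  have coeffP : ∀ (x : K) (t : ℕ),
      (∑ j ∈ range (n+1), ∑ k ∈ range (n+1),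
        C ((n.choose j : ℂ) * (n.choose k : ℂ) * B (x^j) (x^k)) * X ^ ((n-j)+(n-k))).coeff t
      = ∑ p ∈ (range (n+1) ×ˢ range (n+1)).filter (fun p => (n-p.1)+(n-p.2) = t),
          (n.choose p.1 : ℂ) * (n.choose p.2 : ℂ) * B (x^p.1) (x^p.2) := by
    intro x t
    rw [Finset.sum_filter, ← Finset.sum_product', finset_sum_coeff]
    refine Finset.sum_congr rfl fun p hp => ?_
    rw [coeff_C_mul, coeff_X_pow]
    rcases eq_or_ne ((n-p.1)+(n-p.2)) t with h | h
    · simp [h]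
    · simp [h, h.symm]
  have coeffQ : ∀ (x : K) (t : ℕ),
      ((C (a x) + C (a 1) * X) ^ (2*n)).coeff t
      = ∑ i ∈ (range (2*n+1)).filter (fun i => 2*n - i = t),
          a x ^ i * a 1 ^ (2*n - i) * ((2*n).choose i : ℂ) := by
    intro x t
    rw [add_pow, finset_sum_coeff, Finset.sum_filter]
    refine Finset.sum_congr rfl fun i hi => ?_
    have h2 : C (a x) ^ i * (C (a 1) * X) ^ (2*n - i) * ((2*n).choose i : ℂ[X])
        = C (a x ^ i * a 1 ^ (2*n-i) * ((2*n).choose i : ℂ)) * X ^ (2*n-i) := by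
      rw [mul_pow, ← C_pow, ← C_pow, ← C_eq_natCast, C_mul, C_mul]
      ring
    rw [h2, coeff_C_mul, coeff_X_pow]
    rcases eq_or_ne (2*n - i) t with h | h
    · simp [h]
    · simp [h, h.symm]
  -- filter sets
  have filtP1 : (range (n+1) ×ˢ range (n+1)).filter (fun p => (n-p.1)+(n-p.2) = 2*n-1)
      = {((0:ℕ),(1:ℕ)), (1,0)} := by
    ext p
    simp only [Finset.mem_filter, Finset.mem_product, Finset.mem_range, Finset.mem_insert,
      Finset.mem_singleton, Prod.ext_iff]
    omega
  have filtP2 : (range (n+1) ×ˢ range (n+1)).filter (fun p => (n-p.1)+(n-p.2) = 2*n-2)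
      = {((0:ℕ),(2:ℕ)), (1,1), (2,0)} := by
    ext p
    simp only [Finset.mem_filter, Finset.mem_product, Finset.mem_range, Finset.mem_insert,
      Finset.mem_singleton, Prod.ext_iff]
    omega
  have filtQ1 : (range (2*n+1)).filter (fun i => 2*n - i = 2*n-1) = {1} := by
    ext i
    simp only [Finset.mem_filter, Finset.mem_range, Finset.mem_singleton]
    omega
  have filtQ2 : (range (2*n+1)).filter (fun i => 2*n - i = 2*n-2) = {2} := by
    ext i
    simp only [Finset.mem_filter, Finset.mem_range, Finset.mem_singleton]
    omega
  have hn0 : (n:ℂ) ≠ 0 := Nat.cast_ne_zero.mpr (by omega)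
  -- first identity: B 1 x = a x * a 1 ^ (2n-1)
  have key1 : ∀ x : K, B 1 x = a x * a 1 ^ (2*n-1) := by
    intro x
    have e1 : (∑ j ∈ range (n+1), ∑ k ∈ range (n+1),
        C ((n.choose j : ℂ) * (n.choose k : ℂ) * B (x^j) (x^k)) * X ^ ((n-j)+(n-k))).coeff (2*n-1)
        = ((C (a x) + C (a 1) * X) ^ (2*n)).coeff (2*n-1) := by rw [polyid x]
    rw [coeffP, coeffQ, filtP1, filtQ1] at e1
    rw [Finset.sum_insert (by decide), Finset.sum_singleton, Finset.sum_singleton] at e1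
    simp only [Nat.choose_zero_right, Nat.choose_one_right, pow_zero, pow_one] at e1
    have hs := hBs x 1
    have h2n : (2*(n:ℂ)) ≠ 0 := mul_ne_zero two_ne_zero hn0
    have e1' : (2*(n:ℂ)) * B 1 x = (2*(n:ℂ)) * (a x * a 1 ^ (2*n-1)) := by
      push_cast at e1
      linear_combination e1 - (n:ℂ) * hs
    exact mul_left_cancel₀ h2n e1'
  -- second identity
  have key2 : ∀ x : K, ((n:ℂ) * n) * B x x
      = a x ^ 2 * a 1 ^ (2*n-2) * ((2*n).choose 2 : ℂ)
        - 2 * (n.choose 2 : ℂ) * (a (x^2) * a 1 ^ (2*n-1)) := by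
    intro x
    have e2 : (∑ j ∈ range (n+1), ∑ k ∈ range (n+1),
        C ((n.choose j : ℂ) * (n.choose k : ℂ) * B (x^j) (x^k)) * X ^ ((n-j)+(n-k))).coeff (2*n-2)
        = ((C (a x) + C (a 1) * X) ^ (2*n)).coeff (2*n-2) := by rw [polyid x]
    rw [coeffP, coeffQ, filtP2, filtQ2] at e2
    rw [Finset.sum_insert (by decide), Finset.sum_insert (by decide),
      Finset.sum_singleton, Finset.sum_singleton] at e2
    simp only [Nat.choose_zero_right, Nat.choose_one_right, pow_zero, pow_one] at e2
    have hs2 := hBs (x^2) 1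
    have hk := key1 (x^2)
    push_cast at e2
    linear_combination e2 - (n.choose 2 : ℂ) * hs2 - 2 * (n.choose 2 : ℂ) * hk
  -- conclude
  have hnn : ((n:ℂ) * n) ≠ 0 := mul_ne_zero hn0 hn0
  refine ⟨-(2 * (n.choose 2 : ℂ) * a 1 ^ (2*n-1)) / ((n:ℂ)*n),
    (((2*n).choose 2 : ℂ) * a 1 ^ (2*n-2)) / ((n:ℂ)*n), fun x => ?_⟩
  rw [hf]
  have hk2 := key2 x
  field_simp
  linear_combination hk2
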